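/- Let Q be a distribution on [0,1] with density proportional to exp((ε/2)·u(q)) where u(q) = -| |{i : X_i < q}| - ⌊np⌋ | for fixed sorted points X_1 ≤ ... ≤ X_n in [0,1] satisfying min_i (X_(i+1) - X_(i)) ≥ Δ > 0 (with X_(0) = 0, X_(n+1) = 1). If q ~ Q and 𝔈 = | |{i : X_i < q}| - ⌊np⌋ |, then for any β ∈ (0,1), P( 𝔈 ≥ 2(ln(1/Δ) + ln(1/β))/ε ) ≤ β. -/

import Mathlib

open MeasureTheory

private lemma card_lt_aux (n k : ℕ) (hk : k ≤ n) :
    (Finset.univ.filter (fun i : Fin n => (i:ℕ) < k)).card = k := by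
  rcases Nat.lt_or_ge k n with h | h
  · have : (Finset.univ.filter (fun i : Fin n => (i:ℕ) < k)) = Finset.Iio (⟨k, h⟩ : Fin n) := by
      ext i; simp [Fin.lt_def]
    rw [this, Fin.card_Iio]
  · have hkn : k = n := le_antisymm hk h
    have h2 : (Finset.univ.filter (fun i : Fin n => (i:ℕ) < k)) = Finset.univ := by
      ext i; simp; omega
    rw [h2, Finset.card_univ, Fintype.card_fin, hkn]

/-- Empirical error of QExp: if the sorted data points `X 1 ≤ ... ≤ X n` in
`[0,1]` have all gaps (including to the boundary points `0` and `1`) at least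
`Δ > 0`, then the empirical error `𝔈` of the exponential mechanism for the
quantile of order `p` satisfies
`P(𝔈 ≥ 2(ln(1/Δ) + ln(1/β))/ε) ≤ β` for any `β ∈ (0,1)`. -/
theorem stmt_15 (n : ℕ) (hn : 1 ≤ n) (X : Fin n → ℝ)
    (hX : ∀ i, X i ∈ Set.Icc (0:ℝ) 1)
    (hmono : ∀ i j : Fin n, i ≤ j → X i ≤ X j)
    (Δ : ℝ) (hΔ : 0 < Δ)
    (hgapLow : ∀ i, Δ ≤ X i)
    (hgapHigh : ∀ i, X i ≤ 1 - Δ)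
    (hgap : ∀ i j : Fin n, i ≠ j → Δ ≤ |X i - X j|)
    (p : ℝ) (hp : p ∈ Set.Ioo (0:ℝ) 1) (ε : ℝ) (hε : 0 < ε)
    (u : ℝ → ℝ)
    (hu : ∀ q : ℝ, u q =
      -|((Finset.univ.filter (fun i : Fin n => X i < q)).card : ℝ) - ⌊(n:ℝ) * p⌋|)
    (μ Q : Measure ℝ)
    (hμ : μ = (volume.restrict (Set.Icc (0:ℝ) 1)).withDensity
      (fun q => ENNReal.ofReal (Real.exp (ε / 2 * u q))))
    (hQ : Q = (μ Set.univ)⁻¹ • μ)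
    (β : ℝ) (hβ : β ∈ Set.Ioo (0:ℝ) 1) :
    Q {q : ℝ |
        2 * (Real.log (1/Δ) + Real.log (1/β)) / ε ≤
          |((Finset.univ.filter (fun i : Fin n => X i < q)).card : ℝ) - ⌊(n:ℝ) * p⌋|} ≤
      ENNReal.ofReal β := by
  obtain ⟨hp0, hp1⟩ := hp
  obtain ⟨hβ0, hβ1⟩ := hβ
  have hn0 : (0:ℝ) < n := by exact_mod_cast hn
  -- abbreviations
  set m : ℝ := ((⌊(n:ℝ) * p⌋ : ℤ) : ℝ) with hm
  set c : ℝ → ℝ := fun q =>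
    ((Finset.univ.filter (fun i : Fin n => X i < q)).card : ℝ) with hcdef
  set T : ℝ := 2 * (Real.log (1/Δ) + Real.log (1/β)) / ε with hT
  set f : ℝ → ENNReal := fun q => ENNReal.ofReal (Real.exp (ε / 2 * u q)) with hf
  set S : Set ℝ := {q : ℝ | T ≤ |c q - m|} with hS
  -- measurability of c
  have hcm : Measurable c := by
    have hcs : c = fun q => ∑ i : Fin n, (if X i < q then (1:ℝ) else 0) := by
      funext q
      show ((Finset.univ.filter (fun i : Fin n => X i < q)).card : ℝ) = _
      rw [Finset.card_filter]
      push_cast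
      rfl
    rw [hcs]
    refine Finset.measurable_sum _ (fun i _ => ?_)
    exact Measurable.ite (measurableSet_Ioi (a := X i)) measurable_const measurable_const
  have hSm : MeasurableSet S :=
    measurableSet_le measurable_const ((hcm.sub measurable_const).abs)
  -- strict monotonicity
  have hsm : ∀ i j : Fin n, i < j → X i < X j := by
    intro i j hij
    refine lt_of_le_of_ne (hmono i j hij.le) ?_
    intro h
    have hne : i ≠ j := Fin.ne_of_lt hij
    have := hgap i j hne
    rw [h, sub_self, abs_zero] at this; linarith
  -- the floor index
  have hnp0 : 0 < (n:ℝ) * p := mul_pos hn0 hp0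
  have hfl0 : 0 ≤ ⌊(n:ℝ) * p⌋ := Int.floor_nonneg.mpr hnp0.le
  have hfln : ⌊(n:ℝ) * p⌋ < (n:ℤ) := by
    rw [Int.floor_lt]
    push_cast
    nlinarith
  set k : ℕ := (⌊(n:ℝ) * p⌋).toNat with hk
  have hkZ : (k:ℤ) = ⌊(n:ℝ) * p⌋ := Int.toNat_of_nonneg hfl0
  have hkn : k < n := by omega
  have hkm : (k:ℝ) = m := by rw [hm, ← hkZ]; push_cast; ring
  -- upper bound on the density over S
  have key1 : ∀ q ∈ S, f q ≤ ENNReal.ofReal (Δ * β) := by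
    intro q hq
    have hq' : T ≤ |c q - m| := hq
    apply ENNReal.ofReal_le_ofReal
    rw [hu q]
    have h1 : ε / 2 * -|c q - m| ≤ ε / 2 * (-T) := by
      have := mul_le_mul_of_nonneg_left (neg_le_neg hq') (by linarith : (0:ℝ) ≤ ε / 2)
      linarith
    have h2 : ε / 2 * (-T) = -(Real.log (1/Δ) + Real.log (1/β)) := by
      rw [hT]; field_simp
    calc Real.exp (ε / 2 * -|c q - m|) ≤ Real.exp (ε / 2 * (-T)) := Real.exp_le_exp.mpr h1
      _ = Δ * β := by
          rw [h2, neg_add, Real.exp_add, Real.exp_neg, Real.exp_neg,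
            Real.exp_log (by positivity : (0:ℝ) < 1/Δ),
            Real.exp_log (by positivity : (0:ℝ) < 1/β)]
          rw [one_div, one_div, inv_inv, inv_inv]
  -- μ S ≤ Δ β
  have hμS : μ S ≤ ENNReal.ofReal (Δ * β) := by
    rw [hμ, withDensity_apply _ hSm]
    calc ∫⁻ q in S, f q ∂(volume.restrict (Set.Icc (0:ℝ) 1))
        ≤ ∫⁻ _ in S, ENNReal.ofReal (Δ * β) ∂(volume.restrict (Set.Icc (0:ℝ) 1)) :=
          setLIntegral_mono measurable_const key1
      _ = ENNReal.ofReal (Δ * β) * (volume.restrict (Set.Icc (0:ℝ) 1)) S := by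
          rw [setLIntegral_const]
      _ ≤ ENNReal.ofReal (Δ * β) * 1 := by
          refine mul_le_mul_right ?_ _
          rw [Measure.restrict_apply hSm]
          calc volume (S ∩ Set.Icc (0:ℝ) 1) ≤ volume (Set.Icc (0:ℝ) 1) :=
                measure_mono Set.inter_subset_right
            _ = 1 := by rw [Real.volume_Icc]; norm_num
      _ = ENNReal.ofReal (Δ * β) := mul_one _
  -- a good interval of length ≥ Δ where c = k
  obtain ⟨a, b, ha0, hb1, hab, hcard⟩ :
      ∃ a b : ℝ, 0 ≤ a ∧ b ≤ 1 ∧ Δ ≤ b - a ∧ ∀ q ∈ Set.Ioc a b, c q = k := by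
    rcases Nat.eq_zero_or_pos k with hk0 | hkpos
    · refine ⟨0, X ⟨0, hn⟩, le_refl _, (hX _).2, by simpa using hgapLow ⟨0, hn⟩, ?_⟩
      intro q hq
      have hni : ∀ i, ¬ X i < q := by
        intro i
        exact not_lt.mpr (hq.2.trans (hmono ⟨0, hn⟩ i (by simp [Fin.le_def])))
      rw [hcdef]
      simp only []
      rw [Finset.filter_false_of_mem (fun i _ => hni i)]
      simp [hk0]
    · have hk1 : k - 1 < n := by omega
      have hne : (⟨k - 1, hk1⟩ : Fin n) ≠ ⟨k, hkn⟩ := by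
        intro h
        have := Fin.mk.injEq (k-1) hk1 k hkn ▸ h
        simp [Fin.mk.injEq] at h
        omega
      have hlt : X ⟨k - 1, hk1⟩ < X ⟨k, hkn⟩ := by
        apply hsm; rw [Fin.lt_def]; simp; omega
      refine ⟨X ⟨k - 1, hk1⟩, X ⟨k, hkn⟩, (hΔ.le.trans (hgapLow _)), (hX _).2, ?_, ?_⟩
      · have := hgap _ _ hne
        rw [abs_of_nonpos (by linarith)] at this
        linarith
      · intro q hq
        have hiff : ∀ i : Fin n, X i < q ↔ (i:ℕ) < k := by
          intro i
          constructor
          · intro h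
            by_contra hge
            push_neg at hge
            have h2 : X ⟨k, hkn⟩ ≤ X i := hmono _ _ (by rw [Fin.le_def]; simpa using hge)
            have := hq.2
            linarith
          · intro h
            have h2 : X i ≤ X ⟨k - 1, hk1⟩ := hmono _ _ (by rw [Fin.le_def]; simp; omega)
            have := hq.1
            linarith
        have hfe : (Finset.univ.filter (fun i : Fin n => X i < q)) =
            (Finset.univ.filter (fun i : Fin n => (i:ℕ) < k)) := by
          apply Finset.filter_congr
          intro i _
          simp [hiff i]
        rw [hcdef]
        simp only []
        rw [hfe, card_lt_aux n k hkn.le]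
  -- lower bound on μ univ
  have hsub : Set.Ioc a b ⊆ Set.Icc (0:ℝ) 1 := by
    intro q hq
    exact ⟨le_trans ha0 hq.1.le, hq.2.trans hb1⟩
  have hμu : ENNReal.ofReal Δ ≤ μ Set.univ := by
    rw [hμ, withDensity_apply _ MeasurableSet.univ, setLIntegral_univ]
    calc ENNReal.ofReal Δ ≤ volume (Set.Ioc a b) := by
          rw [Real.volume_Ioc]; exact ENNReal.ofReal_le_ofReal hab
      _ = (volume.restrict (Set.Icc (0:ℝ) 1)) (Set.Ioc a b) := by
          rw [Measure.restrict_apply measurableSet_Ioc, Set.inter_eq_left.mpr hsub]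
      _ = ∫⁻ _ in Set.Ioc a b, 1 ∂(volume.restrict (Set.Icc (0:ℝ) 1)) := by
          rw [setLIntegral_one]
      _ = ∫⁻ q in Set.Ioc a b, f q ∂(volume.restrict (Set.Icc (0:ℝ) 1)) := by
          refine setLIntegral_congr_fun measurableSet_Ioc (fun q hq => ?_)
          rw [hf]
          simp only []
          rw [hu q]
          have : ((Finset.univ.filter (fun i : Fin n => X i < q)).card : ℝ) = c q := rfl
          rw [this, hcard q hq, hkm]
          simp
      _ ≤ ∫⁻ q, f q ∂(volume.restrict (Set.Icc (0:ℝ) 1)) := setLIntegral_le_lintegral _ _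
  -- conclude
  have hgoal : Q S ≤ ENNReal.ofReal β := by
    rw [hQ, Measure.smul_apply, smul_eq_mul]
    calc (μ Set.univ)⁻¹ * μ S ≤ (ENNReal.ofReal Δ)⁻¹ * ENNReal.ofReal (Δ * β) :=
          mul_le_mul' (ENNReal.inv_le_inv' hμu) hμS
      _ = ENNReal.ofReal β := by
          rw [ENNReal.ofReal_mul hΔ.le, ← mul_assoc,
            ENNReal.inv_mul_cancel (by simp [hΔ]) ENNReal.ofReal_ne_top, one_mul]
  exact hgoal
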